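/- For every integer n ≥ 1 and every p ∈ I_n, the series Σ_{i=0}^∞ p_{k(i+1)} h_{p,i} defining the split ratio s_p converges (is summable), and its sum satisfies 0 < s_p < 1. -/

import Mathlib

open Matrix

noncomputable section

/-- `M1 = [[1,1,0],[0,1,0],[0,0,1]]`. -/
def M1 : Matrix (Fin 3) (Fin 3) ℝ := !![1, 1, 0; 0, 1, 0; 0, 0, 1]

/-- `M2 = [[1,0,0],[1,1,1],[0,0,1]]`. -/
def M2 : Matrix (Fin 3) (Fin 3) ℝ := !![1, 0, 0; 1, 1, 1; 0, 0, 1]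

/-- `M3 = [[1,0,0],[0,1,0],[0,1,1]]`. -/
def M3 : Matrix (Fin 3) (Fin 3) ℝ := !![1, 0, 0; 0, 1, 0; 0, 1, 1]

/- A tuple `p = (p_n, p_n', q_n, …, p_1, p_1', q_1) ∈ ℕ₀^{3n}` is encoded by three
functions `P P' Q : Fin n → ℕ`, where the index `i : Fin n` corresponds to the
subscript `i + 1` (so `P ⟨0,_⟩ = p_1`, …, `P ⟨n-1,_⟩ = p_n`). -/

/-- The transition matrix `M_p = M1^{p_n} M3^{p_n'} M2^{q_n} ⋯ M1^{p_1} M3^{p_1'} M2^{q_1}`. -/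
def Mp (n : ℕ) (P P' Q : Fin n → ℕ) : Matrix (Fin 3) (Fin 3) ℝ :=
  ((List.finRange n).map fun i => M1 ^ P i.rev * M3 ^ P' i.rev * M2 ^ Q i.rev).prod

/-- Membership of the tuple `p` in `I_n`. -/
def memI (n : ℕ) (P P' Q : Fin n → ℕ) : Prop :=
  (∀ i, 0 < Q i) ∧ (∀ i, 0 < P i + P' i) ∧ (∃ j, 0 < P j) ∧ (∃ k, 0 < P' k)

/-- Finite continued fraction: `cf [a₁, …, a_m] x = 1/(a₁ + 1/(a₂ + ⋯ + 1/(a_m + x)))`. -/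
def cf (l : List ℕ) (x : ℝ) : ℝ := l.foldr (fun a y => 1 / (a + y)) x

/-- The (0-indexed) block index `k(j+1) - 1 = n - 1 - (j mod n)` used at step `j + 1`. -/
def blk (n : ℕ) (hn : 0 < n) (j : ℕ) : Fin n :=
  ⟨n - 1 - j % n, lt_of_le_of_lt (Nat.sub_le _ _) (Nat.sub_lt hn one_pos)⟩

/-- The sequence `(a₁, …, a_{2n}) = (p_n + p_n', q_n, …, p_1 + p_1', q_1)` as a list. -/
def aList (n : ℕ) (hn : 0 < n) (P P' Q : Fin n → ℕ) : List ℕ :=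
  (List.range n).flatMap fun i => [P (blk n hn i) + P' (blk n hn i), Q (blk n hn i)]

/-- `isH0 n hn P P' Q h0` says that `h0` is the number `h_{p,0}`: a real number in `(0,1)`
that is a fixed point of `x ↦ 1/(a₁ + 1/(a₂ + ⋯ + 1/(a_{2n} + x)))` (there is exactly one). -/
def isH0 (n : ℕ) (hn : 0 < n) (P P' Q : Fin n → ℕ) (h0 : ℝ) : Prop :=
  h0 ∈ Set.Ioo (0 : ℝ) 1 ∧ cf (aList n hn P P' Q) h0 = h0

/-- The pair `(w_{p,j}, h_{p,j})`, with `w_{p,0} = 1`, `h_{p,0} = h0`, and for `j ≥ 1`: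
`w_{p,j} = w_{p,j-1} − (p_{k(j)} + p'_{k(j)}) h_{p,j-1}`, `h_{p,j} = h_{p,j-1} − q_{k(j)} w_{p,j}`. -/
def wh (n : ℕ) (hn : 0 < n) (P P' Q : Fin n → ℕ) (h0 : ℝ) : ℕ → ℝ × ℝ
  | 0 => (1, h0)
  | j + 1 =>
    let prev := wh n hn P P' Q h0 j
    let b := blk n hn j
    let w := prev.1 - ((P b : ℝ) + (P' b : ℝ)) * prev.2
    (w, prev.2 - (Q b : ℝ) * w)

/-- The width `w_{p,j}`. -/
def wseq (n : ℕ) (hn : 0 < n) (P P' Q : Fin n → ℕ) (h0 : ℝ) (j : ℕ) : ℝ :=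
  (wh n hn P P' Q h0 j).1

/-- The height `h_{p,j}`. -/
def hseq (n : ℕ) (hn : 0 < n) (P P' Q : Fin n → ℕ) (h0 : ℝ) (j : ℕ) : ℝ :=
  (wh n hn P P' Q h0 j).2

/-- The split ratio `s_p = Σ_{i=0}^∞ p_{k(i+1)} h_{p,i}`. -/
def splitRatio (n : ℕ) (hn : 0 < n) (P P' Q : Fin n → ℕ) (h0 : ℝ) : ℝ :=
  ∑' i : ℕ, (P (blk n hn i) : ℝ) * hseq n hn P P' Q h0 i

/-- The reindexing realizing the shift `T`: the tuple `T(p)` is given by the functions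
`P ∘ shiftIdx n hn`, `P' ∘ shiftIdx n hn`, `Q ∘ shiftIdx n hn`. -/
def shiftIdx (n : ℕ) (hn : 0 < n) (i : Fin n) : Fin n :=
  ⟨(i.val + (n - 1)) % n, Nat.mod_lt _ hn⟩

/-! ### Auxiliary development for `stmt4` -/

namespace S4

lemma cf_cons (a : ℕ) (l : List ℕ) (x : ℝ) : cf (a :: l) x = 1 / ((a : ℝ) + cf l x) := rfl

lemma cf_append (l1 l2 : List ℕ) (x : ℝ) : cf (l1 ++ l2) x = cf l1 (cf l2 x) := by
  simp [cf, List.foldr_append]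

lemma cf_mem_Ioo (l : List ℕ) (hl : ∀ a ∈ l, 1 ≤ a) {x : ℝ} (hx : x ∈ Set.Ioo (0:ℝ) 1) :
    cf l x ∈ Set.Ioo (0:ℝ) 1 := by
  induction l with
  | nil => exact hx
  | cons a l ih =>
    have h1 := ih (fun b hb => hl b (List.mem_cons_of_mem _ hb))
    have ha : (1:ℝ) ≤ (a:ℝ) := by exact_mod_cast hl a List.mem_cons_self
    rw [Set.mem_Ioo] at h1 ⊢
    obtain ⟨h1a, h1b⟩ := h1
    rw [cf_cons]
    refine ⟨div_pos one_pos (by linarith), ?_⟩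
    rw [div_lt_one (by linarith)]; linarith

/-- `a_{2j+1}`-style entry of the periodic coefficient sequence. -/
def Aa (n : ℕ) (hn : 0 < n) (P P' : Fin n → ℕ) (j : ℕ) : ℕ :=
  P (blk n hn j) + P' (blk n hn j)

/-- `a_{2j+2}`-style entry of the periodic coefficient sequence. -/
def Bq (n : ℕ) (hn : 0 < n) (Q : Fin n → ℕ) (j : ℕ) : ℕ := Q (blk n hn j)

lemma blk_add (n : ℕ) (hn : 0 < n) (j : ℕ) : blk n hn (j + n) = blk n hn j := by
  simp [blk, Nat.add_mod_right]

/-- The coefficient list rotated to start at block `j`. -/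
def Lj (n : ℕ) (hn : 0 < n) (P P' Q : Fin n → ℕ) (j : ℕ) : List ℕ :=
  (List.range n).flatMap fun i => [Aa n hn P P' (j + i), Bq n hn Q (j + i)]

/-- The tail of `Lj` after its first two entries. -/
def Tl (n : ℕ) (hn : 0 < n) (P P' Q : Fin n → ℕ) (j : ℕ) : List ℕ :=
  (List.range (n - 1)).flatMap fun i => [Aa n hn P P' (j + 1 + i), Bq n hn Q (j + 1 + i)]

lemma Lj_zero (n : ℕ) (hn : 0 < n) (P P' Q : Fin n → ℕ) :
    Lj n hn P P' Q 0 = aList n hn P P' Q := by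
  simp [Lj, aList, Aa, Bq]

lemma Lj_eq (n : ℕ) (hn : 0 < n) (P P' Q : Fin n → ℕ) (j : ℕ) :
    Lj n hn P P' Q j = Aa n hn P P' j :: Bq n hn Q j :: Tl n hn P P' Q j := by
  obtain ⟨m, rfl⟩ : ∃ m, n = m + 1 := ⟨n - 1, (Nat.succ_pred_eq_of_pos hn).symm⟩
  have hfun : (fun i => [Aa (m+1) hn P P' (j + 1 + i), Bq (m+1) hn Q (j + 1 + i)])
      = fun i => [Aa (m+1) hn P P' (j + (i + 1)), Bq (m+1) hn Q (j + (i + 1))] := by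
    funext i
    have h : j + 1 + i = j + (i + 1) := by omega
    rw [h]
  simp only [Lj, Tl, Nat.add_sub_cancel, List.range_succ_eq_map, List.flatMap_cons,
    List.flatMap_map, Nat.add_zero, hfun, Nat.succ_eq_add_one]
  rfl

lemma Lj_rot (n : ℕ) (hn : 0 < n) (P P' Q : Fin n → ℕ) (j : ℕ) :
    Lj n hn P P' Q (j + 1) = Tl n hn P P' Q j ++ [Aa n hn P P' j, Bq n hn Q j] := by
  obtain ⟨m, rfl⟩ : ∃ m, n = m + 1 := ⟨n - 1, (Nat.succ_pred_eq_of_pos hn).symm⟩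
  have h1 : j + 1 + m = j + (m + 1) := by omega
  have h2 : Aa (m+1) hn P P' (j + (m+1)) = Aa (m+1) hn P P' j := by
    simp [Aa, blk_add]
  have h3 : Bq (m+1) hn Q (j + (m+1)) = Bq (m+1) hn Q j := by
    simp [Bq, blk_add]
  simp only [Lj, Tl, Nat.add_sub_cancel, List.range_succ, List.flatMap_append,
    List.flatMap_cons, List.flatMap_nil, h1, h2, h3, List.append_nil]

lemma one_le_Aa (n : ℕ) (hn : 0 < n) (P P' Q : Fin n → ℕ) (hI : memI n P P' Q) (j : ℕ) :
    1 ≤ Aa n hn P P' j := hI.2.1 _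

lemma one_le_Bq (n : ℕ) (hn : 0 < n) (P P' Q : Fin n → ℕ) (hI : memI n P P' Q) (j : ℕ) :
    1 ≤ Bq n hn Q j := hI.1 _

lemma Tl_entries (n : ℕ) (hn : 0 < n) (P P' Q : Fin n → ℕ) (hI : memI n P P' Q) (j : ℕ) :
    ∀ a ∈ Tl n hn P P' Q j, 1 ≤ a := by
  intro a ha
  simp only [Tl, List.mem_flatMap, List.mem_range, List.mem_cons, List.mem_singleton,
    List.not_mem_nil, or_false] at ha
  obtain ⟨i, -, rfl | rfl⟩ := ha
  · exact one_le_Aa n hn P P' Q hI _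
  · exact one_le_Bq n hn P P' Q hI _

/-- The sequence of tails `x_j` of the periodic continued fraction. -/
def xs (n : ℕ) (hn : 0 < n) (P P' Q : Fin n → ℕ) (h0 : ℝ) : ℕ → ℝ
  | 0 => h0
  | j + 1 => cf (Tl n hn P P' Q j) (xs n hn P P' Q h0 j)

lemma xs_succ (n : ℕ) (hn : 0 < n) (P P' Q : Fin n → ℕ) (h0 : ℝ) (j : ℕ) :
    xs n hn P P' Q h0 (j + 1) = cf (Tl n hn P P' Q j) (xs n hn P P' Q h0 j) := rfl

lemma xs_good (n : ℕ) (hn : 0 < n) (P P' Q : Fin n → ℕ) (hI : memI n P P' Q)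
    (h0 : ℝ) (hh0 : isH0 n hn P P' Q h0) (j : ℕ) :
    xs n hn P P' Q h0 j ∈ Set.Ioo (0:ℝ) 1 ∧
      cf (Lj n hn P P' Q j) (xs n hn P P' Q h0 j) = xs n hn P P' Q h0 j := by
  induction j with
  | zero => exact ⟨hh0.1, by rw [Lj_zero]; exact hh0.2⟩
  | succ j ih =>
    obtain ⟨hx, hfix⟩ := ih
    have hy : xs n hn P P' Q h0 (j+1) ∈ Set.Ioo (0:ℝ) 1 := by
      rw [xs_succ]
      exact cf_mem_Ioo _ (Tl_entries n hn P P' Q hI j) hx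
    refine ⟨hy, ?_⟩
    have hAB : cf [Aa n hn P P' j, Bq n hn Q j] (xs n hn P P' Q h0 (j+1))
        = xs n hn P P' Q h0 j := by
      have h1 : ([Aa n hn P P' j, Bq n hn Q j] ++ Tl n hn P P' Q j) = Lj n hn P P' Q j := by
        rw [Lj_eq]; rfl
      rw [xs_succ, ← cf_append, h1, hfix]
    rw [Lj_rot, cf_append, hAB, ← xs_succ]

lemma xs_step (n : ℕ) (hn : 0 < n) (P P' Q : Fin n → ℕ) (hI : memI n P P' Q)
    (h0 : ℝ) (hh0 : isH0 n hn P P' Q h0) (j : ℕ) :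
    xs n hn P P' Q h0 j
      = 1 / ((Aa n hn P P' j : ℝ) + 1 / ((Bq n hn Q j : ℝ) + xs n hn P P' Q h0 (j+1))) := by
  have hfix := (xs_good n hn P P' Q hI h0 hh0 j).2
  rw [Lj_eq, cf_cons, cf_cons, ← xs_succ] at hfix
  exact hfix.symm

lemma wseq_succ (n : ℕ) (hn : 0 < n) (P P' Q : Fin n → ℕ) (h0 : ℝ) (j : ℕ) :
    wseq n hn P P' Q h0 (j + 1)
      = wseq n hn P P' Q h0 j - (Aa n hn P P' j : ℝ) * hseq n hn P P' Q h0 j := by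
  simp [wseq, hseq, wh, Aa]

lemma hseq_succ (n : ℕ) (hn : 0 < n) (P P' Q : Fin n → ℕ) (h0 : ℝ) (j : ℕ) :
    hseq n hn P P' Q h0 (j + 1)
      = hseq n hn P P' Q h0 j - (Bq n hn Q j : ℝ) * wseq n hn P P' Q h0 (j + 1) := by
  simp [wseq, hseq, wh, Bq]

lemma whx (n : ℕ) (hn : 0 < n) (P P' Q : Fin n → ℕ) (hI : memI n P P' Q)
    (h0 : ℝ) (hh0 : isH0 n hn P P' Q h0) (j : ℕ) :
    0 < wseq n hn P P' Q h0 j ∧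
      hseq n hn P P' Q h0 j = wseq n hn P P' Q h0 j * xs n hn P P' Q h0 j := by
  induction j with
  | zero =>
    constructor
    · show (0:ℝ) < 1; norm_num
    · show h0 = 1 * h0; ring
  | succ j ih =>
    obtain ⟨hw, hh⟩ := ih
    set w := wseq n hn P P' Q h0 j with hwdef
    set h := hseq n hn P P' Q h0 j with hhdef
    set x := xs n hn P P' Q h0 j with hxdef
    set x' := xs n hn P P' Q h0 (j+1) with hx'def
    have hx : x ∈ Set.Ioo (0:ℝ) 1 := (xs_good n hn P P' Q hI h0 hh0 j).1
    have hx' : x' ∈ Set.Ioo (0:ℝ) 1 := (xs_good n hn P P' Q hI h0 hh0 (j+1)).1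
    have ha : (1:ℝ) ≤ (Aa n hn P P' j : ℝ) := by
      exact_mod_cast one_le_Aa n hn P P' Q hI j
    have hq : (1:ℝ) ≤ (Bq n hn Q j : ℝ) := by
      exact_mod_cast one_le_Bq n hn P P' Q hI j
    set a := (Aa n hn P P' j : ℝ)
    set q := (Bq n hn Q j : ℝ)
    have hd : (0:ℝ) < q + x' := by have := hx'.1; linarith
    have hstep : x = 1 / (a + 1 / (q + x')) := xs_step n hn P P' Q hI h0 hh0 j
    have hD : (0:ℝ) < a + 1 / (q + x') := by
      have : (0:ℝ) < 1 / (q + x') := by positivity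
      linarith
    have hxD : x * (a + 1 / (q + x')) = 1 := by
      rw [hstep]; field_simp
    have hkey : w - a * h = h / (q + x') := by
      rw [hh]
      have : w * x * (a + 1 / (q + x')) = w := by
        rw [mul_assoc, hxD, mul_one]
      field_simp at this ⊢
      nlinarith [this]
    have hwpos : (0:ℝ) < h := by rw [hh]; exact mul_pos hw hx.1
    have hw' : wseq n hn P P' Q h0 (j+1) = h / (q + x') := by
      rw [wseq_succ, ← hwdef, ← hhdef, hkey]
    refine ⟨?_, ?_⟩
    · rw [hw']; exact div_pos hwpos hd
    · rw [hseq_succ, hw', ← hhdef]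
      rw [hw'] at *
      field_simp
      ring

lemma hseq_pos (n : ℕ) (hn : 0 < n) (P P' Q : Fin n → ℕ) (hI : memI n P P' Q)
    (h0 : ℝ) (hh0 : isH0 n hn P P' Q h0) (j : ℕ) :
    0 < hseq n hn P P' Q h0 j := by
  obtain ⟨hw, hh⟩ := whx n hn P P' Q hI h0 hh0 j
  rw [hh]
  exact mul_pos hw (xs_good n hn P P' Q hI h0 hh0 j).1.1

lemma hseq_half (n : ℕ) (hn : 0 < n) (P P' Q : Fin n → ℕ) (hI : memI n P P' Q)
    (h0 : ℝ) (hh0 : isH0 n hn P P' Q h0) (j : ℕ) :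
    2 * hseq n hn P P' Q h0 (j + 1) ≤ hseq n hn P P' Q h0 j := by
  obtain ⟨hw', hh'⟩ := whx n hn P P' Q hI h0 hh0 (j + 1)
  have hx' := (xs_good n hn P P' Q hI h0 hh0 (j + 1)).1
  have hq : (1:ℝ) ≤ (Bq n hn Q j : ℝ) := by exact_mod_cast one_le_Bq n hn P P' Q hI j
  have hstep := hseq_succ n hn P P' Q h0 j
  rw [Set.mem_Ioo] at hx'
  nlinarith [hw', hh', hx'.1, hx'.2]

lemma hseq_geo (n : ℕ) (hn : 0 < n) (P P' Q : Fin n → ℕ) (hI : memI n P P' Q)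
    (h0 : ℝ) (hh0 : isH0 n hn P P' Q h0) (j : ℕ) :
    hseq n hn P P' Q h0 j ≤ h0 * (1 / 2) ^ j := by
  induction j with
  | zero => show h0 ≤ h0 * (1/2)^0; norm_num
  | succ j ih =>
    have h1 := hseq_half n hn P P' Q hI h0 hh0 j
    have : hseq n hn P P' Q h0 (j + 1) ≤ hseq n hn P P' Q h0 j / 2 := by linarith
    calc hseq n hn P P' Q h0 (j + 1) ≤ hseq n hn P P' Q h0 j / 2 := this
      _ ≤ (h0 * (1/2)^j) / 2 := by linarith
      _ = h0 * (1/2)^(j+1) := by ring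

lemma wseq_le (n : ℕ) (hn : 0 < n) (P P' Q : Fin n → ℕ) (hI : memI n P P' Q)
    (h0 : ℝ) (hh0 : isH0 n hn P P' Q h0) (j : ℕ) :
    wseq n hn P P' Q h0 (j + 1) ≤ hseq n hn P P' Q h0 j := by
  have hw' := (whx n hn P P' Q hI h0 hh0 (j + 1)).1
  have hh' := hseq_pos n hn P P' Q hI h0 hh0 (j + 1)
  have hq : (1:ℝ) ≤ (Bq n hn Q j : ℝ) := by exact_mod_cast one_le_Bq n hn P P' Q hI j
  have hstep := hseq_succ n hn P P' Q h0 j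
  nlinarith

lemma summable_gen (n : ℕ) (hn : 0 < n) (P P' Q : Fin n → ℕ) (hI : memI n P P' Q)
    (h0 : ℝ) (hh0 : isH0 n hn P P' Q h0) (R : Fin n → ℕ) :
    Summable (fun i : ℕ => (R (blk n hn i) : ℝ) * hseq n hn P P' Q h0 i) := by
  set C := (Finset.univ.sup R : ℕ) with hC
  apply Summable.of_nonneg_of_le
    (g := fun i : ℕ => (R (blk n hn i) : ℝ) * hseq n hn P P' Q h0 i)
    (f := fun i : ℕ => ((C : ℝ) * h0) * (1 / 2) ^ i)
  · intro i
    exact mul_nonneg (Nat.cast_nonneg _) (hseq_pos n hn P P' Q hI h0 hh0 i).le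
  · intro i
    have hRC : (R (blk n hn i) : ℝ) ≤ (C : ℝ) := by
      exact_mod_cast Finset.le_sup (Finset.mem_univ (blk n hn i))
    have hgeo := hseq_geo n hn P P' Q hI h0 hh0 i
    have hpos := hseq_pos n hn P P' Q hI h0 hh0 i
    calc (R (blk n hn i) : ℝ) * hseq n hn P P' Q h0 i
        ≤ (C : ℝ) * (h0 * (1/2)^i) :=
          mul_le_mul hRC hgeo hpos.le (Nat.cast_nonneg _)
      _ = ((C : ℝ) * h0) * (1/2)^i := by ring
  · exact summable_geometric_two.mul_left _

lemma tsum_pos_gen (n : ℕ) (hn : 0 < n) (P P' Q : Fin n → ℕ) (hI : memI n P P' Q)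
    (h0 : ℝ) (hh0 : isH0 n hn P P' Q h0) (R : Fin n → ℕ) (hR : ∃ j, 0 < R j) :
    0 < ∑' i : ℕ, (R (blk n hn i) : ℝ) * hseq n hn P P' Q h0 i := by
  obtain ⟨j, hj⟩ := hR
  have hblk : blk n hn (n - 1 - j.val) = j := by
    have h1 : n - 1 - j.val < n := by omega
    have h2 : j.val < n := j.isLt
    apply Fin.ext
    simp only [blk]
    rw [Nat.mod_eq_of_lt h1]
    omega
  apply Summable.tsum_pos (summable_gen n hn P P' Q hI h0 hh0 R)
    (fun i => mul_nonneg (Nat.cast_nonneg _) (hseq_pos n hn P P' Q hI h0 hh0 i).le)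
    (n - 1 - j.val)
  rw [hblk]
  exact mul_pos (by exact_mod_cast hj) (hseq_pos n hn P P' Q hI h0 hh0 _)

lemma wseq_tendsto (n : ℕ) (hn : 0 < n) (P P' Q : Fin n → ℕ) (hI : memI n P P' Q)
    (h0 : ℝ) (hh0 : isH0 n hn P P' Q h0) :
    Filter.Tendsto (wseq n hn P P' Q h0) Filter.atTop (nhds 0) := by
  rw [← Filter.tendsto_add_atTop_iff_nat 1]
  apply squeeze_zero (fun N => (whx n hn P P' Q hI h0 hh0 (N + 1)).1.le)
    (fun N => le_trans (wseq_le n hn P P' Q hI h0 hh0 N) (hseq_geo n hn P P' Q hI h0 hh0 N))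
  have := (tendsto_pow_atTop_nhds_zero_of_lt_one (by norm_num : (0:ℝ) ≤ 1/2)
    (by norm_num : (1:ℝ)/2 < 1)).const_mul h0
  simpa using this

lemma hasSum_one (n : ℕ) (hn : 0 < n) (P P' Q : Fin n → ℕ) (hI : memI n P P' Q)
    (h0 : ℝ) (hh0 : isH0 n hn P P' Q h0) :
    HasSum (fun i : ℕ => (Aa n hn P P' i : ℝ) * hseq n hn P P' Q h0 i) 1 := by
  have S : Summable (fun i : ℕ => (Aa n hn P P' i : ℝ) * hseq n hn P P' Q h0 i) := by
    have hs := (summable_gen n hn P P' Q hI h0 hh0 P).add (summable_gen n hn P P' Q hI h0 hh0 P')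
    apply Summable.congr hs
    intro i
    simp only [Aa]
    push_cast
    ring
  have hps : ∀ N, ∑ i ∈ Finset.range N,
      (Aa n hn P P' i : ℝ) * hseq n hn P P' Q h0 i = 1 - wseq n hn P P' Q h0 N := by
    intro N
    have h1 : ∀ i, (Aa n hn P P' i : ℝ) * hseq n hn P P' Q h0 i
        = wseq n hn P P' Q h0 i - wseq n hn P P' Q h0 (i + 1) := by
      intro i
      have := wseq_succ n hn P P' Q h0 i
      linarith
    rw [Finset.sum_congr rfl fun i _ => h1 i, Finset.sum_range_sub' (wseq n hn P P' Q h0) N]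
    have hw0 : wseq n hn P P' Q h0 0 = 1 := rfl
    rw [hw0]
  have ht1 : Filter.Tendsto (fun N => ∑ i ∈ Finset.range N,
      (Aa n hn P P' i : ℝ) * hseq n hn P P' Q h0 i) Filter.atTop (nhds (1 - 0)) := by
    simp only [hps]
    exact tendsto_const_nhds.sub (wseq_tendsto n hn P P' Q hI h0 hh0)
  have ht2 := S.hasSum.tendsto_sum_nat
  have : (∑' i : ℕ, (Aa n hn P P' i : ℝ) * hseq n hn P P' Q h0 i) = 1 - 0 :=
    tendsto_nhds_unique ht2 ht1
  rw [sub_zero] at this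
  exact this ▸ S.hasSum

end S4

/-- the series `Σ_{i=0}^∞ p_{k(i+1)} h_{p,i}` defining `s_p` is summable
and `0 < s_p < 1`. -/
theorem stmt4 (n : ℕ) (hn : 0 < n) (P P' Q : Fin n → ℕ) (hI : memI n P P' Q)
    (h0 : ℝ) (hh0 : isH0 n hn P P' Q h0) :
    Summable (fun i : ℕ => (P (blk n hn i) : ℝ) * hseq n hn P P' Q h0 i) ∧
    0 < splitRatio n hn P P' Q h0 ∧ splitRatio n hn P P' Q h0 < 1 := by
  have SP := S4.summable_gen n hn P P' Q hI h0 hh0 P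
  have SP' := S4.summable_gen n hn P P' Q hI h0 hh0 P'
  refine ⟨SP, ?_, ?_⟩
  · exact S4.tsum_pos_gen n hn P P' Q hI h0 hh0 P hI.2.2.1
  · have hP'pos := S4.tsum_pos_gen n hn P P' Q hI h0 hh0 P' hI.2.2.2
    have hadd : HasSum (fun i : ℕ => (P (blk n hn i) : ℝ) * hseq n hn P P' Q h0 i
        + (P' (blk n hn i) : ℝ) * hseq n hn P P' Q h0 i)
        (splitRatio n hn P P' Q h0 + ∑' i : ℕ, (P' (blk n hn i) : ℝ) * hseq n hn P P' Q h0 i) :=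
      SP.hasSum.add SP'.hasSum
    have hone := S4.hasSum_one n hn P P' Q hI h0 hh0
    have hfun : (fun i : ℕ => (S4.Aa n hn P P' i : ℝ) * hseq n hn P P' Q h0 i)
        = fun i : ℕ => (P (blk n hn i) : ℝ) * hseq n hn P P' Q h0 i
          + (P' (blk n hn i) : ℝ) * hseq n hn P P' Q h0 i := by
      funext i
      simp only [S4.Aa]
      push_cast
      ring
    rw [hfun] at hone
    have := hadd.unique hone
    linarith
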